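/- If the sum indecomposable permutations of a permutation class C form a well-quasi-ordered set under pattern containment, then C itself is well-quasi-ordered. -/

import Mathlib

def Contains {k n : ℕ} (σ : Equiv.Perm (Fin k)) (π : Equiv.Perm (Fin n)) : Prop :=
  ∃ f : Fin k → Fin n, StrictMono f ∧ ∀ i j : Fin k, σ i < σ j ↔ π (f i) < π (f j)

abbrev PermOf := Σ n : ℕ, Equiv.Perm (Fin n)

def PContains (σ π : PermOf) : Prop := Contains σ.2 π.2

/-- The (direct) sum of two permutations. -/
def sumPerm {m n : ℕ} (σ : Equiv.Perm (Fin m)) (τ : Equiv.Perm (Fin n)) :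
    Equiv.Perm (Fin (m + n)) :=
  finSumFinEquiv.symm.trans ((Equiv.sumCongr σ τ).trans finSumFinEquiv)

def psum (σ τ : PermOf) : PermOf := ⟨σ.1 + τ.1, sumPerm σ.2 τ.2⟩

/-- A permutation is sum decomposable if it is the sum of two nonempty permutations. -/
def SumDecomposable (π : PermOf) : Prop :=
  ∃ σ τ : PermOf, 0 < σ.1 ∧ 0 < τ.1 ∧ π = psum σ τ

/-- A nonempty permutation which is not sum decomposable. -/
def SumIndecomposable (π : PermOf) : Prop := 0 < π.1 ∧ ¬ SumDecomposable π

lemma pcontains_refl (π : PermOf) : PContains π π :=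
  ⟨id, strictMono_id, fun _ _ => Iff.rfl⟩

lemma pcontains_trans {a b c : PermOf} (h1 : PContains a b) (h2 : PContains b c) :
    PContains a c := by
  obtain ⟨f, hf, hf2⟩ := h1
  obtain ⟨g, hg, hg2⟩ := h2
  exact ⟨g ∘ f, hg.comp hf, fun i j => (hf2 i j).trans (hg2 (f i) (f j))⟩

instance : IsRefl PermOf PContains := ⟨pcontains_refl⟩
instance : IsTrans PermOf PContains := ⟨fun _ _ _ => pcontains_trans⟩
instance : IsPreorder PermOf PContains := { refl := pcontains_refl, trans := fun _ _ _ => pcontains_trans }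

lemma sumPerm_castAdd {m n : ℕ} (σ : Equiv.Perm (Fin m)) (τ : Equiv.Perm (Fin n)) (i : Fin m) :
    sumPerm σ τ (Fin.castAdd n i) = Fin.castAdd n (σ i) := by
  simp [sumPerm, ← finSumFinEquiv_apply_left]

lemma sumPerm_natAdd {m n : ℕ} (σ : Equiv.Perm (Fin m)) (τ : Equiv.Perm (Fin n)) (i : Fin n) :
    sumPerm σ τ (Fin.natAdd m i) = Fin.natAdd m (τ i) := by
  simp [sumPerm, ← finSumFinEquiv_apply_right]

lemma sumPerm_val {m n : ℕ} (σ : Equiv.Perm (Fin m)) (τ : Equiv.Perm (Fin n)) (i : Fin (m + n)) :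
    ((sumPerm σ τ) i).val =
      if h : i.val < m then (σ ⟨i.val, h⟩).val else (τ ⟨i.val - m, by omega⟩).val + m := by
  rcases lt_or_ge i.val m with h | h
  · have : i = Fin.castAdd n ⟨i.val, h⟩ := by ext; rfl
    rw [this, sumPerm_castAdd]
    simp [h]
  · have : i = Fin.natAdd m ⟨i.val - m, by omega⟩ := by ext; simp; omega
    rw [this, sumPerm_natAdd]
    simp [Fin.natAdd]
    omega

lemma pcontains_of_val_eq {p q : PermOf} (h : p.1 = q.1)
    (hv : ∀ i : Fin p.1, (p.2 i).val = (q.2 (Fin.cast h i)).val) : PContains p q := by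
  refine ⟨Fin.cast h, fun i j hij => by rw [Fin.lt_def] at hij ⊢; exact hij, fun i j => ?_⟩
  rw [Fin.lt_def, Fin.lt_def, hv i, hv j]

lemma pcontains_psum_left (σ τ : PermOf) : PContains σ (psum σ τ) := by
  refine ⟨Fin.castAdd τ.1, fun i j hij => by
    show (Fin.castAdd τ.1 i : Fin (σ.1 + τ.1)) < Fin.castAdd τ.1 j; rw [Fin.lt_def] at hij ⊢; exact hij,
    fun i j => ?_⟩
  show _ ↔ sumPerm σ.2 τ.2 _ < sumPerm σ.2 τ.2 _
  rw [sumPerm_castAdd, sumPerm_castAdd]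
  exact Iff.rfl

lemma pcontains_psum_right (σ τ : PermOf) : PContains τ (psum σ τ) := by
  refine ⟨Fin.natAdd σ.1, fun i j hij => by
    show (Fin.natAdd σ.1 i : Fin (σ.1 + τ.1)) < Fin.natAdd σ.1 j
    rw [Fin.lt_def] at hij ⊢; simpa using hij, fun i j => ?_⟩
  show _ ↔ sumPerm σ.2 τ.2 _ < sumPerm σ.2 τ.2 _
  rw [sumPerm_natAdd, sumPerm_natAdd, Fin.lt_def, Fin.lt_def]
  simp only [Fin.coe_natAdd]
  omega

lemma sumPerm_lt_ll {m n : ℕ} (σ : Equiv.Perm (Fin m)) (τ : Equiv.Perm (Fin n))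
    {i j : Fin (m + n)} (hi : i.val < m) (hj : j.val < m) :
    (sumPerm σ τ i < sumPerm σ τ j ↔ σ ⟨i.val, hi⟩ < σ ⟨j.val, hj⟩) := by
  rw [Fin.lt_def, sumPerm_val, sumPerm_val, dif_pos hi, dif_pos hj, Fin.lt_def]

lemma sumPerm_lt_lr {m n : ℕ} (σ : Equiv.Perm (Fin m)) (τ : Equiv.Perm (Fin n))
    {i j : Fin (m + n)} (hi : i.val < m) (hj : ¬ j.val < m) :
    sumPerm σ τ i < sumPerm σ τ j := by
  rw [Fin.lt_def, sumPerm_val, sumPerm_val, dif_pos hi, dif_neg hj]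
  have := (σ ⟨i.val, hi⟩).isLt
  omega

lemma sumPerm_lt_rl {m n : ℕ} (σ : Equiv.Perm (Fin m)) (τ : Equiv.Perm (Fin n))
    {i j : Fin (m + n)} (hi : ¬ i.val < m) (hj : j.val < m) :
    ¬ sumPerm σ τ i < sumPerm σ τ j := by
  rw [Fin.lt_def, sumPerm_val, sumPerm_val, dif_neg hi, dif_pos hj]
  have := (σ ⟨j.val, hj⟩).isLt
  omega

lemma sumPerm_lt_rr {m n : ℕ} (σ : Equiv.Perm (Fin m)) (τ : Equiv.Perm (Fin n))
    {i j : Fin (m + n)} (hi : ¬ i.val < m) (hj : ¬ j.val < m) :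
    (sumPerm σ τ i < sumPerm σ τ j ↔
      τ ⟨i.val - m, by omega⟩ < τ ⟨j.val - m, by omega⟩) := by
  rw [Fin.lt_def, sumPerm_val, sumPerm_val, dif_neg hi, dif_neg hj, Fin.lt_def]
  omega

lemma contains_sumPerm {m n m' n' : ℕ} {σ : Equiv.Perm (Fin m)} {σ' : Equiv.Perm (Fin m')}
    {τ : Equiv.Perm (Fin n)} {τ' : Equiv.Perm (Fin n')}
    (h1 : Contains σ σ') (h2 : Contains τ τ') :
    Contains (sumPerm σ τ) (sumPerm σ' τ') := by
  obtain ⟨f, hf, hf2⟩ := h1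
  obtain ⟨g, hg, hg2⟩ := h2
  refine ⟨fun i => if h : i.val < m then Fin.castAdd n' (f ⟨i.val, h⟩)
    else Fin.natAdd m' (g ⟨i.val - m, by omega⟩), fun i j hij => ?_, fun i j => ?_⟩
  · dsimp only
    rw [Fin.lt_def] at hij
    by_cases hi : i.val < m <;> by_cases hj : j.val < m
    · rw [dif_pos hi, dif_pos hj]
      have := hf (show (⟨i.val, hi⟩ : Fin m) < ⟨j.val, hj⟩ by rw [Fin.lt_def]; exact hij)
      rw [Fin.lt_def] at this ⊢
      simpa using this
    · rw [dif_pos hi, dif_neg hj, Fin.lt_def]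
      simp only [Fin.coe_castAdd, Fin.coe_natAdd]
      have := (f ⟨i.val, hi⟩).isLt
      omega
    · omega
    · rw [dif_neg hi, dif_neg hj, Fin.lt_def]
      simp only [Fin.coe_natAdd]
      have := hg (show (⟨i.val - m, by omega⟩ : Fin n) < ⟨j.val - m, by omega⟩ by
        rw [Fin.lt_def]; simp only; omega)
      rw [Fin.lt_def] at this
      omega
  · dsimp only
    by_cases hi : i.val < m <;> by_cases hj : j.val < m
    · rw [dif_pos hi, dif_pos hj, sumPerm_lt_ll σ τ hi hj,
        sumPerm_lt_ll σ' τ' (by simpa using (f ⟨i.val, hi⟩).isLt)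
          (by simpa using (f ⟨j.val, hj⟩).isLt)]
      have e1 : (⟨(Fin.castAdd n' (f ⟨i.val, hi⟩)).val, by simpa using (f ⟨i.val, hi⟩).isLt⟩ :
          Fin m') = f ⟨i.val, hi⟩ := by ext; simp
      have e2 : (⟨(Fin.castAdd n' (f ⟨j.val, hj⟩)).val, by simpa using (f ⟨j.val, hj⟩).isLt⟩ :
          Fin m') = f ⟨j.val, hj⟩ := by ext; simp
      rw [e1, e2]
      exact hf2 _ _
    · rw [dif_pos hi, dif_neg hj]
      exact iff_of_true (sumPerm_lt_lr σ τ hi hj)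
        (sumPerm_lt_lr σ' τ' (by simpa using (f ⟨i.val, hi⟩).isLt) (by simp))
    · rw [dif_neg hi, dif_pos hj]
      exact iff_of_false (sumPerm_lt_rl σ τ hi hj)
        (sumPerm_lt_rl σ' τ' (by simp) (by simpa using (f ⟨j.val, hj⟩).isLt))
    · rw [dif_neg hi, dif_neg hj, sumPerm_lt_rr σ τ hi hj,
        sumPerm_lt_rr σ' τ' (by simp) (by simp)]
      have e1 : (⟨(Fin.natAdd m' (g ⟨i.val - m, by omega⟩)).val - m', by
          simpa using (g ⟨i.val - m, by omega⟩).isLt⟩ : Fin n') = g ⟨i.val - m, by omega⟩ := by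
        ext; simp
      have e2 : (⟨(Fin.natAdd m' (g ⟨j.val - m, by omega⟩)).val - m', by
          simpa using (g ⟨j.val - m, by omega⟩).isLt⟩ : Fin n') = g ⟨j.val - m, by omega⟩ := by
        ext; simp
      rw [e1, e2]
      exact hg2 _ _

lemma psum_mono {σ σ' τ τ' : PermOf} (h1 : PContains σ σ') (h2 : PContains τ τ') :
    PContains (psum σ τ) (psum σ' τ') :=
  contains_sumPerm h1 h2

def pzero : PermOf := ⟨0, 1⟩

lemma pcontains_pzero (π : PermOf) : PContains pzero π :=
  ⟨fun i => i.elim0, fun i => i.elim0, fun i => i.elim0⟩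

lemma pcontains_of_card_zero {π : PermOf} (h : π.1 = 0) : PContains π pzero :=
  ⟨fun i => (Fin.cast h i).elim0, fun i => (Fin.cast h i).elim0, fun i => (Fin.cast h i).elim0⟩

lemma psum_pzero_left (π : PermOf) : PContains (psum π pzero) π := by
  refine pcontains_of_val_eq (show π.1 + 0 = π.1 from rfl) (fun i => ?_)
  show (sumPerm π.2 pzero.2 i).val = _
  rw [sumPerm_val π.2 pzero.2 i, dif_pos (show i.val < π.1 from i.isLt)]
  rfl

lemma pzero_psum_left (π : PermOf) : PContains (psum pzero π) π := by
  refine pcontains_of_val_eq (show 0 + π.1 = π.1 from Nat.zero_add _) (fun i => ?_)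
  show (sumPerm pzero.2 π.2 i).val = _
  rw [sumPerm_val pzero.2 π.2 i, dif_neg (show ¬ i.val < pzero.1 from Nat.not_lt_zero _)]
  rfl

lemma pzero_psum_right (π : PermOf) : PContains π (psum pzero π) :=
  pcontains_psum_right pzero π

lemma sumPerm_assoc_val {a b c : ℕ} (A : Equiv.Perm (Fin a)) (B : Equiv.Perm (Fin b))
    (C : Equiv.Perm (Fin c)) (i : Fin (a + b + c)) :
    ((sumPerm (sumPerm A B) C) i).val
      = ((sumPerm A (sumPerm B C)) (Fin.cast (Nat.add_assoc a b c) i)).val := by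
  rw [sumPerm_val, sumPerm_val]
  simp only [Fin.coe_cast]
  by_cases h1 : i.val < a
  · rw [dif_pos (show i.val < a + b by omega), dif_pos h1, sumPerm_val,
      dif_pos (show (⟨i.val, by omega⟩ : Fin (a+b)).val < a from h1)]
  · by_cases h2 : i.val < a + b
    · rw [dif_pos h2, dif_neg h1, sumPerm_val,
        dif_neg (show ¬ (⟨i.val, h2⟩ : Fin (a+b)).val < a from h1), sumPerm_val,
        dif_pos (show (⟨i.val - a, by omega⟩ : Fin (b+c)).val < b by simp only; omega)]
    · rw [dif_neg h2, dif_neg h1, sumPerm_val,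
        dif_neg (show ¬ (⟨i.val - a, by omega⟩ : Fin (b+c)).val < b by simp only; omega)]
      have hx : i.val - (a + b) = i.val - a - b := by omega
      simp only [hx]
      omega

lemma psum_assoc_le₁ (a b c : PermOf) : PContains (psum (psum a b) c) (psum a (psum b c)) :=
  pcontains_of_val_eq (Nat.add_assoc a.1 b.1 c.1) (fun i => sumPerm_assoc_val a.2 b.2 c.2 i)

lemma psum_assoc_le₂ (a b c : PermOf) : PContains (psum a (psum b c)) (psum (psum a b) c) := by
  refine pcontains_of_val_eq (Nat.add_assoc a.1 b.1 c.1).symm (fun i => ?_)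
  have e : Fin.cast (Nat.add_assoc a.1 b.1 c.1) (Fin.cast (Nat.add_assoc a.1 b.1 c.1).symm i)
      = i := Fin.ext rfl
  have h := sumPerm_assoc_val a.2 b.2 c.2 (Fin.cast (Nat.add_assoc a.1 b.1 c.1).symm i)
  rw [e] at h
  exact h.symm

def psumList (L : List PermOf) : PermOf := L.foldr psum pzero

lemma mem_pcontains_psumList {σ : PermOf} {L : List PermOf} (h : σ ∈ L) :
    PContains σ (psumList L) := by
  induction L with
  | nil => simp at h
  | cons a L ih =>
    rcases List.mem_cons.1 h with rfl | h
    · exact pcontains_psum_left σ (psumList L)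
    · exact pcontains_trans (ih h) (pcontains_psum_right a (psumList L))

lemma psumList_append_le (L1 L2 : List PermOf) :
    PContains (psumList (L1 ++ L2)) (psum (psumList L1) (psumList L2)) := by
  induction L1 with
  | nil => exact pzero_psum_right (psumList L2)
  | cons a L1 ih =>
    exact pcontains_trans (psum_mono (pcontains_refl a) ih) (psum_assoc_le₂ a _ _)

lemma psumList_append_ge (L1 L2 : List PermOf) :
    PContains (psum (psumList L1) (psumList L2)) (psumList (L1 ++ L2)) := by
  induction L1 with
  | nil => exact pzero_psum_left (psumList L2)
  | cons a L1 ih =>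
    exact pcontains_trans (psum_assoc_le₁ a _ _) (psum_mono (pcontains_refl a) ih)

lemma psumList_mono {L L' : List PermOf} (h : List.SublistForall₂ PContains L L') :
    PContains (psumList L) (psumList L') := by
  induction h with
  | nil => exact pcontains_pzero _
  | cons hab _ ih => exact psum_mono hab ih
  | cons_right _ ih => exact pcontains_trans ih (pcontains_psum_right _ _)

lemma exists_decomp (π : PermOf) : ∃ L : List PermOf,
    (∀ σ ∈ L, SumIndecomposable σ) ∧ PContains π (psumList L) ∧ PContains (psumList L) π := by
  suffices H : ∀ n (π : PermOf), π.1 ≤ n → ∃ L : List PermOf,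
      (∀ σ ∈ L, SumIndecomposable σ) ∧ PContains π (psumList L) ∧ PContains (psumList L) π from
    H π.1 π le_rfl
  intro n
  induction n with
  | zero =>
    intro π hπ
    exact ⟨[], by simp, pcontains_of_card_zero (by omega), pcontains_pzero π⟩
  | succ n ih =>
    intro π hπ
    by_cases h0 : π.1 = 0
    · exact ⟨[], by simp, pcontains_of_card_zero h0, pcontains_pzero π⟩
    by_cases hd : SumDecomposable π
    · obtain ⟨σ, τ, hσ, hτ, rfl⟩ := hd
      have hsum : (psum σ τ).1 = σ.1 + τ.1 := rfl
      obtain ⟨L1, hL1, hle1, hge1⟩ := ih σ (by omega)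
      obtain ⟨L2, hL2, hle2, hge2⟩ := ih τ (by omega)
      refine ⟨L1 ++ L2, fun x hx => ?_, ?_, ?_⟩
      · rcases List.mem_append.1 hx with h | h
        exacts [hL1 x h, hL2 x h]
      · exact pcontains_trans (psum_mono hle1 hle2) (psumList_append_ge L1 L2)
      · exact pcontains_trans (psumList_append_le L1 L2) (psum_mono hge1 hge2)
    · refine ⟨[π], ?_, pcontains_psum_left π pzero, psum_pzero_left π⟩
      intro x hx
      rcases List.mem_singleton.1 hx with rfl
      exact ⟨Nat.pos_of_ne_zero h0, hd⟩

lemma pcontains_card_le {σ π : PermOf} (h : PContains σ π) : σ.1 ≤ π.1 := by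
  obtain ⟨f, hf, -⟩ := h
  simpa using Fintype.card_le_of_injective f hf.injective

lemma strictMono_fin_id {n : ℕ} {f : Fin n → Fin n} (hf : StrictMono f) : f = id := by
  have hbij : Function.Bijective f := (Finite.injective_iff_bijective).1 hf.injective
  have hr : Set.range f = Set.range (id : Fin n → Fin n) := by
    rw [Set.range_id]
    exact Set.range_eq_univ.2 hbij.2
  haveI : WellFoundedLT (Fin n) := inferInstance
  exact (hf.range_inj strictMono_id).1 hr

lemma pcontains_eq_of_card_eq {σ π : PermOf} (h : PContains σ π) (hc : σ.1 = π.1) :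
    σ = π := by
  obtain ⟨n, σp⟩ := σ
  obtain ⟨n', πp⟩ := π
  dsimp at hc
  subst hc
  obtain ⟨f, hf, h2⟩ := h
  have hfid : f = id := strictMono_fin_id hf
  subst hfid
  simp only [id] at h2
  have key : ∀ x, πp (σp.symm x) = x := by
    have hsm : StrictMono (fun x => πp (σp.symm x)) := by
      intro a b hab
      have : σp (σp.symm a) < σp (σp.symm b) := by
        rwa [Equiv.apply_symm_apply, Equiv.apply_symm_apply]
      exact (h2 _ _).1 this
    have := strictMono_fin_id hsm
    intro x
    exact congrFun this x
  have : σp = πp := by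
    ext i
    have h3 := key (σp i)
    rw [Equiv.symm_apply_apply] at h3
    exact congrArg Fin.val h3.symm
  rw [this]

/-- If the sum indecomposable permutations of a permutation class `C` contain no infinite
antichain under pattern containment, then `C` itself contains no infinite antichain. -/
theorem wqo_of_sumIndecomposable_wqo (C : Set PermOf)
    (hclosed : ∀ σ π : PermOf, π ∈ C → PContains σ π → σ ∈ C)
    (hind : ¬ ∃ g : ℕ → PermOf, (∀ i, g i ∈ C ∧ SumIndecomposable (g i)) ∧
      ∀ i j, i ≠ j → ¬ PContains (g i) (g j)) :
    ¬ ∃ g : ℕ → PermOf, (∀ i, g i ∈ C) ∧ ∀ i j, i ≠ j → ¬ PContains (g i) (g j) := by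
  rintro ⟨g, hgC, hanti⟩
  have hSpwo : {π : PermOf | π ∈ C ∧ SumIndecomposable π}.PartiallyWellOrderedOn PContains := by
    refine Set.partiallyWellOrderedOn_iff_exists_lt.2 fun f hf => ?_
    by_contra hcon
    push_neg at hcon
    have hwf : (Set.univ : Set ℕ).IsPWO := (Set.isWF_univ_iff.mpr ⟨wellFounded_lt⟩).isPWO
    obtain ⟨φ, hφ⟩ := hwf.exists_monotone_subseq (f := fun n => (f n).1) (fun _ => trivial)
    refine hind ⟨f ∘ φ, fun i => ⟨(hf (φ i)).1, (hf (φ i)).2⟩, fun i j hij => ?_⟩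
    rcases lt_trichotomy i j with h | h | h
    · exact hcon (φ i) (φ j) (φ.strictMono h)
    · exact absurd h hij
    · intro hcont
      have h1 : (f (φ i)).1 ≤ (f (φ j)).1 := pcontains_card_le hcont
      have h2 : (f (φ j)).1 ≤ (f (φ i)).1 := hφ h.le
      have heq := pcontains_eq_of_card_eq hcont (le_antisymm h1 h2)
      refine hcon (φ j) (φ i) (φ.strictMono h) ?_
      have heq' : f (φ i) = f (φ j) := heq
      rw [← heq']
      exact pcontains_refl _
  have hL := Set.PartiallyWellOrderedOn.partiallyWellOrderedOn_sublistForall₂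
    PContains hSpwo
  choose L hLind hle hge using fun i => exists_decomp (g i)
  have hmem : ∀ i, L i ∈ {l : List PermOf | ∀ x, x ∈ l → x ∈
      {π : PermOf | π ∈ C ∧ SumIndecomposable π}} := by
    intro i x hx
    have hxle : PContains x (g i) := pcontains_trans (mem_pcontains_psumList hx) (hge i)
    exact ⟨hclosed x (g i) (hgC i) hxle, hLind i x hx⟩
  obtain ⟨m, n, hmn, hsub⟩ := hL.exists_lt hmem
  exact hanti m n hmn.ne
    (pcontains_trans (hle m) (pcontains_trans (psumList_mono hsub) (hge n)))
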